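/- For every t ≥ 0, there exist constants h_1(t), h_2(t) > 0 (depending only on the alphabet data, p, r, t) such that for every l ≥ 1, every σ ∈ Φ_l and every h ≥ 1: h_2(t) · E_r(σ)^t · I_{h,r}(t) ≤ Σ_{ρ∈Λ_h(σ)} E_r(ρ)^t ≤ h_1(t) · E_r(σ)^t · I_{h,r}(t). -/

import Mathlib

open Filter MeasureTheory
open scoped BigOperators ENNReal NNReal Topology

namespace LGQ

noncomputable section

/-- The alphabet `G = {(i,j) : 1 ≤ i ≤ n_j, 1 ≤ j ≤ m}`, encoded as a sigma type:
an element is `⟨j, i⟩` with `j : Fin m` (the `y`-coordinate) and `i : Fin (n j)`. -/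
abbrev Alph (m : ℕ) (n : Fin m → ℕ) := Σ j : Fin m, Fin (n j)

/-- A pair `σ = (σ_L, σ_R)` with `σ_L ∈ G^*` and `σ_R ∈ G_y^*`. -/
abbrev Wd (m : ℕ) (n : Fin m → ℕ) := List (Alph m n) × List (Fin m)

variable {m : ℕ} {n : Fin m → ℕ}

/-- `a_ω := ∏ a_{i_h j_h}` along a word `ω ∈ G^*`. -/
def aP (a : Alph m n → ℝ) (w : List (Alph m n)) : ℝ := (w.map a).prod

/-- `b_τ := ∏ b_{j_h}` along a word `τ ∈ G_y^*`. -/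
def bP (b : Fin m → ℝ) (τ : List (Fin m)) : ℝ := (τ.map b).prod

/-- `σ_y := (σ_L)_y ∗ σ_R` : the `y`-word of a pair `σ = σ_L ∗ σ_R`. -/
def sy (σ : Wd m n) : List (Fin m) := σ.1.map Sigma.fst ++ σ.2

/-- `Ψ_l := {σ = σ_L ∗ σ_R : σ_L ∈ G^l, σ_R ∈ G_y^*, b_{(σ_y)^-} ≥ a_{σ_L} > b_{σ_y}}`. -/
def Psi (a : Alph m n → ℝ) (b : Fin m → ℝ) (l : ℕ) : Set (Wd m n) :=
  {σ | σ.1.length = l ∧ 1 ≤ σ.2.length ∧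
    aP a σ.1 ≤ bP b (sy σ).dropLast ∧ bP b (sy σ) < aP a σ.1}

/-- `Ψ^* := ⋃_{l ≥ 1} Ψ_l`. -/
def PsiStar (a : Alph m n → ℝ) (b : Fin m → ℝ) : Set (Wd m n) :=
  {σ | ∃ l, 1 ≤ l ∧ σ ∈ Psi a b l}

/-- `q_j := Σ_{i=1}^{n_j} p_{ij}`. -/
def qf (p : Alph m n → ℝ) (j : Fin m) : ℝ := ∑ i : Fin (n j), p ⟨j, i⟩

/-- `p_{σ_L} := ∏ p_{i_h j_h}`. -/
def pP (p : Alph m n → ℝ) (w : List (Alph m n)) : ℝ := (w.map p).prod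

/-- `q_{σ_R} := ∏ q_{j_h}`. -/
def qP (p : Alph m n → ℝ) (τ : List (Fin m)) : ℝ := (τ.map (qf p)).prod

/-- `E_r(σ) := p_{σ_L} q_{σ_R} a_{σ_L}^r` (note `E_r(θ) = 1`). -/
def Er (a p : Alph m n → ℝ) (r : ℝ) (σ : Wd m n) : ℝ :=
  pP p σ.1 * qP p σ.2 * aP a σ.1 ^ r

/-- `a̲ := min a_{ij}`. -/
def aLo (a : Alph m n → ℝ) : ℝ := ⨅ g, a g

/-- `ā := max a_{ij}`. -/
def aHi (a : Alph m n → ℝ) : ℝ := ⨆ g, a g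

/-- `b̲ := min b_j`. -/
def bLo (b : Fin m → ℝ) : ℝ := ⨅ j, b j

/-- `b̄ := max b_j`. -/
def bHi (b : Fin m → ℝ) : ℝ := ⨆ j, b j

/-- `p̲ := min p_{ij}`. -/
def pLo (p : Alph m n → ℝ) : ℝ := ⨅ g, p g

/-- `q̲ := min q_j`. -/
def qLo (p : Alph m n → ℝ) : ℝ := ⨅ j, qf p j

/-- `A_1 := ⌊log a̲ / log b̄⌋ + 1`. -/
def A1 (a : Alph m n → ℝ) (b : Fin m → ℝ) : ℤ :=
  ⌊Real.log (aLo a) / Real.log (bHi b)⌋ + 1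

/-- `A_2 := ⌊log b̲ / log ā⌋ + 1`. -/
def A2 (a : Alph m n → ℝ) (b : Fin m → ℝ) : ℤ :=
  ⌊Real.log (bLo b) / Real.log (aHi a)⌋ + 1

/-- `A_3 := max_{(i,j)∈G} a_{ij}/b_j`. -/
def A3 (a : Alph m n → ℝ) (b : Fin m → ℝ) : ℝ := ⨆ g : Alph m n, a g / b g.1

/-- `A_4 := log A_3 / log b̲`. -/
def A4 (a : Alph m n → ℝ) (b : Fin m → ℝ) : ℝ := Real.log (A3 a b) / Real.log (bLo b)

/-- `A_6 := ⌊1/A_4⌋`. -/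
def A6 (a : Alph m n → ℝ) (b : Fin m → ℝ) : ℤ := ⌊1 / A4 a b⌋

/-- `η̲_r := p̲ q̲^{A_1} a̲^r`. -/
def etaLo (a : Alph m n → ℝ) (b : Fin m → ℝ) (p : Alph m n → ℝ) (r : ℝ) : ℝ :=
  pLo p * qLo p ^ A1 a b * aLo a ^ r

/-- `A_{5,r} := ⌊log(q̲² η̲_r)/(r·log ā)⌋`. -/
def A5 (a : Alph m n → ℝ) (b : Fin m → ℝ) (p : Alph m n → ℝ) (r : ℝ) : ℤ :=
  ⌊Real.log (qLo p ^ 2 * etaLo a b p r) / (r * Real.log (aHi a))⌋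

/-- `T_{1,r} := ⌊(A_1 + A_{5,r} + 3)/A_4⌋`. -/
def T1 (a : Alph m n → ℝ) (b : Fin m → ℝ) (p : Alph m n → ℝ) (r : ℝ) : ℤ :=
  ⌊((A1 a b + A5 a b p r + 3 : ℤ) : ℝ) / A4 a b⌋

/-- `ρ = σ^♭`:  for `σ ∈ Ψ_1`, `σ^♭ = θ`; for `σ ∈ Ψ_l` with `l ≥ 2`, `σ^♭` is the unique
`ρ ∈ Ψ_{l-1}` with `ρ_L = (σ_L)^-` and `ρ_y` an initial segment of `σ_y`. -/
def IsFlat (a : Alph m n → ℝ) (b : Fin m → ℝ) (σ ρ : Wd m n) : Prop :=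
  (σ.1.length = 1 ∧ ρ = (([], []) : Wd m n)) ∨
  (2 ≤ σ.1.length ∧ ρ ∈ Psi a b (σ.1.length - 1) ∧ ρ.1 = σ.1.dropLast ∧ sy ρ <+: sy σ)

/-- `Λ_{n,r} := {σ ∈ Ψ^* : E_r(σ^♭) ≥ η̲_r^n > E_r(σ)}`. -/
def Lam (a : Alph m n → ℝ) (b : Fin m → ℝ) (p : Alph m n → ℝ) (r : ℝ) (N : ℕ) :
    Set (Wd m n) :=
  {σ | σ ∈ PsiStar a b ∧ ∃ ρ : Wd m n, IsFlat a b σ ρ ∧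
    etaLo a b p r ^ N ≤ Er a p r ρ ∧ Er a p r σ < etaLo a b p r ^ N}

/-- `S_{n,r} := {σ ∈ Ψ^* : η̲_r^{n+1} ≤ E_r(σ) < η̲_r^n}`. -/
def Snr (a : Alph m n → ℝ) (b : Fin m → ℝ) (p : Alph m n → ℝ) (r : ℝ) (N : ℕ) :
    Set (Wd m n) :=
  {σ | σ ∈ PsiStar a b ∧ etaLo a b p r ^ (N + 1) ≤ Er a p r σ ∧
    Er a p r σ < etaLo a b p r ^ N}

/-- `G_1(σ) := {ω ∈ S_{n,r} : σ_L ⪯ ω_L and σ_y ⪯ ω_y}`. -/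
def G1 (a : Alph m n → ℝ) (b : Fin m → ℝ) (p : Alph m n → ℝ) (r : ℝ) (N : ℕ)
    (σ : Wd m n) : Set (Wd m n) :=
  {ω | ω ∈ Snr a b p r N ∧ σ.1 <+: ω.1 ∧ sy σ <+: sy ω}

/-- `Λ_h(σ) := {ρ ∈ Φ_{l+h} : σ ⪯ ρ}` (componentwise order on pairs). -/
def LamH (a : Alph m n → ℝ) (b : Fin m → ℝ) (σ : Wd m n) (h : ℕ) : Set (Wd m n) :=
  {ρ | ρ ∈ Psi a b (σ.1.length + h) ∧ σ.1 <+: ρ.1 ∧ σ.2 <+: ρ.2}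

/-- `I_{k,r}(t) := Σ_{ω∈Φ_k} E_r(ω)^t`. -/
def Ih (a : Alph m n → ℝ) (b : Fin m → ℝ) (p : Alph m n → ℝ) (r : ℝ) (k : ℕ) (t : ℝ) : ℝ :=
  ∑' ω : Psi a b k, Er a p r ω.1 ^ t

/-- `Υ_n(t,s) := Σ_{σ∈Ψ_n} (p_{σ_L} q_{σ_R})^t a_{σ_L}^s`. -/
def Ups (a : Alph m n → ℝ) (b : Fin m → ℝ) (p : Alph m n → ℝ) (N : ℕ) (t s : ℝ) : ℝ :=
  ∑' σ : Psi a b N, (pP p σ.1.1 * qP p σ.1.2) ^ t * aP a σ.1.1 ^ s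

/-- `τ_0 := ((1,j_0),(n_{j_0},j_0))`. -/
def tau0 (j0 : Fin m) (h : 2 ≤ n j0) : List (Alph m n) :=
  [⟨j0, ⟨0, by omega⟩⟩, ⟨j0, ⟨n j0 - 1, by omega⟩⟩]

/-- `σ̄` is a bar-extension of `σ ∈ Ψ_l`: `σ̄ ∈ Ψ_{l+2}`, `σ̄_L = σ_L ∗ τ_0`, `σ_R ⪯ σ̄_R`. -/
def BarExt (a : Alph m n → ℝ) (b : Fin m → ℝ) (j0 : Fin m) (h : 2 ≤ n j0)
    (σ σb : Wd m n) : Prop :=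
  σb ∈ Psi a b (σ.1.length + 2) ∧ σb.1 = σ.1 ++ tau0 j0 h ∧ σ.2 <+: σb.2

/-- cylinder set `[σ] ⊆ Φ_∞ = G^ℕ × G_y^ℕ`. -/
def Cyl (σ : Wd m n) : Set ((ℕ → Alph m n) × (ℕ → Fin m)) :=
  {x | (∀ i : ℕ, ∀ hi : i < σ.1.length, x.1 i = σ.1.get ⟨i, hi⟩) ∧
       (∀ i : ℕ, ∀ hi : i < σ.2.length, x.2 i = σ.2.get ⟨i, hi⟩)}

/-- the affine map `f_{ij}(x,y) = (a_{ij} x + c_{ij}, b_j y + d_j)`. -/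
def fmap (a : Alph m n → ℝ) (b : Fin m → ℝ) (c : Alph m n → ℝ) (d : Fin m → ℝ)
    (g : Alph m n) : ℝ × ℝ → ℝ × ℝ :=
  fun x => (a g * x.1 + c g, b g.1 * x.2 + d g.1)

/-- `A_{L,σ} = c_{i_1j_1} + Σ_{p≥2} (∏_{h<p} a_{i_hj_h}) c_{i_pj_p}`. -/
def xL (a c : Alph m n → ℝ) : List (Alph m n) → ℝ
  | [] => 0
  | g :: w => c g + a g * xL a c w

/-- `B_{L,σ} = d_{j_1} + Σ_{p≥2} (∏_{h<p} b_{j_h}) d_{j_p}`. -/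
def yL (b d : Fin m → ℝ) : List (Fin m) → ℝ
  | [] => 0
  | j :: τ => d j + b j * yL b d τ

/-- the approximate square `F_σ = [A_{L,σ}, A_{L,σ}+a_{σ_L}] × [B_{L,σ}, B_{L,σ}+b_{σ_y}]`. -/
def Fsq (a c : Alph m n → ℝ) (b d : Fin m → ℝ) (σ : Wd m n) : Set (ℝ × ℝ) :=
  Set.Icc (xL a c σ.1) (xL a c σ.1 + aP a σ.1) ×ˢ
    Set.Icc (yL b d (sy σ)) (yL b d (sy σ) + bP b (sy σ))

/-- the Euclidean distance on `ℝ²`. -/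
def eudist (x y : ℝ × ℝ) : ℝ := Real.sqrt ((x.1 - y.1) ^ 2 + (x.2 - y.2) ^ 2)

/-- the horizontal distance `d_h(S,T) = inf{|x-x'| : (x,y)∈S, (x',y')∈T}`. -/
def dH (S T : Set (ℝ × ℝ)) : ℝ := sInf {e | ∃ x ∈ S, ∃ y ∈ T, e = |x.1 - y.1|}

/-- the (Euclidean) diameter of a subset of `ℝ²`. -/
def euDiam (S : Set (ℝ × ℝ)) : ℝ := sSup {e | ∃ x ∈ S, ∃ y ∈ S, e = eudist x y}

/-- the `N`-th quantization error of order `r`. -/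
def qerr (μ : Measure (ℝ × ℝ)) (r : ℝ) (N : ℕ) : ℝ :=
  sInf {e : ℝ | ∃ α : Finset (ℝ × ℝ), ∃ hα : α.Nonempty, α.card ≤ N ∧
    e = (∫ x, α.inf' hα (fun y => eudist x y ^ r) ∂μ) ^ (1 / r)}

/-- the topological support of a measure on `ℝ²`. -/
def suppSet (μ : Measure (ℝ × ℝ)) : Set (ℝ × ℝ) :=
  {x | ∀ U : Set (ℝ × ℝ), IsOpen U → x ∈ U → μ U ≠ 0}

/-- the dyadic square `[k 2^{-N}, (k+1) 2^{-N}) × [k' 2^{-N}, (k'+1) 2^{-N})`. -/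
def Dy (N : ℕ) (k : ℤ × ℤ) : Set (ℝ × ℝ) :=
  Set.Ico ((k.1 : ℝ) * (2 : ℝ) ^ (-(N : ℤ))) (((k.1 : ℝ) + 1) * (2 : ℝ) ^ (-(N : ℤ))) ×ˢ
    Set.Ico ((k.2 : ℝ) * (2 : ℝ) ^ (-(N : ℤ))) (((k.2 : ℝ) + 1) * (2 : ℝ) ^ (-(N : ℤ)))


section ListProd
variable {α : Type*}

lemma lp_pos {f : α → ℝ} (hf : ∀ x, 0 < f x) (w : List α) : 0 < (w.map f).prod := by
  induction w with
  | nil => simp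
  | cons x w ih => simpa using mul_pos (hf x) ih

lemma lp_le_one {f : α → ℝ} (hf : ∀ x, 0 < f x) (hf1 : ∀ x, f x ≤ 1) (w : List α) :
    (w.map f).prod ≤ 1 := by
  induction w with
  | nil => simp
  | cons x w ih =>
    simpa using mul_le_one₀ (hf1 x) (le_of_lt (lp_pos hf w)) ih

lemma lp_prefix_le {f : α → ℝ} (hf : ∀ x, 0 < f x) (hf1 : ∀ x, f x ≤ 1)
    {u w : List α} (h : u <+: w) : (w.map f).prod ≤ (u.map f).prod := by
  obtain ⟨e, rfl⟩ := h
  simp only [List.map_append, List.prod_append]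
  calc (u.map f).prod * (e.map f).prod ≤ (u.map f).prod * 1 :=
        mul_le_mul_of_nonneg_left (lp_le_one hf hf1 e) (le_of_lt (lp_pos hf u))
    _ = (u.map f).prod := mul_one _

lemma lp_le_pow {f : α → ℝ} {c : ℝ} (hf0 : ∀ x, 0 < f x) (hfc : ∀ x, f x ≤ c)
    (w : List α) : (w.map f).prod ≤ c ^ w.length := by
  induction w with
  | nil => simp
  | cons x w ih =>
    simp only [List.map_cons, List.prod_cons, List.length_cons, pow_succ]
    rw [mul_comm (c ^ w.length) c]
    exact mul_le_mul (hfc x) ih (le_of_lt (lp_pos hf0 w)) (le_trans (le_of_lt (hf0 x)) (hfc x))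

lemma lp_pow_le {f : α → ℝ} {c : ℝ} (hc : 0 ≤ c) (hfc : ∀ x, c ≤ f x)
    (w : List α) : c ^ w.length ≤ (w.map f).prod := by
  induction w with
  | nil => simp
  | cons x w ih =>
    simp only [List.map_cons, List.prod_cons, List.length_cons, pow_succ]
    rw [mul_comm (c ^ w.length) c]
    exact mul_le_mul (hfc x) ih (pow_nonneg hc _) (le_trans hc (hfc x))

lemma prefix_dropLast {u w : List α} (h : u <+: w) (hlt : u.length < w.length) :
    u <+: w.dropLast := by
  rw [List.dropLast_eq_take]
  have hu : u = w.take u.length := List.prefix_iff_eq_take.mp h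
  rw [hu]
  exact List.take_prefix_take_left (by omega)

end ListProd

/-- minimal prefix `v` of `w` with `bP b v < θ` (if it exists). -/
def mp (b : Fin m → ℝ) : ℝ → List (Fin m) → List (Fin m)
  | _, [] => []
  | θ, j :: τ => if 1 < θ then [] else j :: mp b (θ / b j) τ

lemma mp_nil (b : Fin m → ℝ) (θ : ℝ) : mp b θ [] = [] := rfl
lemma mp_cons (b : Fin m → ℝ) (θ : ℝ) (j : Fin m) (τ : List (Fin m)) :
    mp b θ (j :: τ) = if 1 < θ then [] else j :: mp b (θ / b j) τ := rfl

lemma bP_nil (b : Fin m → ℝ) : bP b [] = 1 := rfl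
lemma bP_cons (b : Fin m → ℝ) (j : Fin m) (τ : List (Fin m)) :
    bP b (j :: τ) = b j * bP b τ := by simp [bP]
lemma bP_append (b : Fin m → ℝ) (τ₁ τ₂ : List (Fin m)) :
    bP b (τ₁ ++ τ₂) = bP b τ₁ * bP b τ₂ := by simp [bP]
lemma aP_append (a : Alph m n → ℝ) (w₁ w₂ : List (Alph m n)) :
    aP a (w₁ ++ w₂) = aP a w₁ * aP a w₂ := by simp [aP]
lemma pP_append (p : Alph m n → ℝ) (w₁ w₂ : List (Alph m n)) :
    pP p (w₁ ++ w₂) = pP p w₁ * pP p w₂ := by simp [pP]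
lemma qP_append (p : Alph m n → ℝ) (τ₁ τ₂ : List (Fin m)) :
    qP p (τ₁ ++ τ₂) = qP p τ₁ * qP p τ₂ := by simp [qP]
lemma bP_replicate (b : Fin m → ℝ) (k : ℕ) (j : Fin m) :
    bP b (List.replicate k j) = b j ^ k := by simp [bP]
lemma bP_pos {b : Fin m → ℝ} (hb : ∀ j, 0 < b j) (τ : List (Fin m)) : 0 < bP b τ :=
  lp_pos hb τ
lemma aP_pos {a : Alph m n → ℝ} (ha : ∀ g, 0 < a g) (w : List (Alph m n)) : 0 < aP a w :=
  lp_pos ha w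

lemma bP_dropLast_getLast {b : Fin m → ℝ} {τ : List (Fin m)} (h : τ ≠ []) :
    bP b τ.dropLast * b (τ.getLast h) = bP b τ := by
  conv_rhs => rw [← List.dropLast_append_getLast h]
  rw [bP_append]
  simp [bP]

lemma aP_le_bP {a : Alph m n → ℝ} {b : Fin m → ℝ} (ha : ∀ g, 0 < a g)
    (hab : ∀ g : Alph m n, a g ≤ b g.1) (u : List (Alph m n)) :
    aP a u ≤ bP b (u.map Sigma.fst) := by
  induction u with
  | nil => simp [aP, bP]
  | cons x u ih =>
    simp only [List.map_cons]
    rw [aP, bP, List.map_cons, List.map_cons, List.prod_cons, List.prod_cons]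
    exact mul_le_mul (hab x) ih (le_of_lt (lp_pos ha u))
      (le_trans (le_of_lt (ha x)) (hab x))

lemma mp_prefix (b : Fin m → ℝ) (θ : ℝ) (w : List (Fin m)) : mp b θ w <+: w := by
  induction w generalizing θ with
  | nil => simp [mp_nil]
  | cons j τ ih =>
    rw [mp_cons]
    split
    · exact List.nil_prefix
    · exact List.cons_prefix_cons.mpr ⟨rfl, ih _⟩

lemma mp_lt (b : Fin m → ℝ) (hb : ∀ j, 0 < b j) {θ : ℝ} {w : List (Fin m)}
    (hw : bP b w < θ) : bP b (mp b θ w) < θ := by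
  induction w generalizing θ with
  | nil => simpa [mp_nil] using hw
  | cons j τ ih =>
    rw [mp_cons]
    split_ifs with h1
    · simpa [bP_nil] using h1
    · rw [bP_cons]
      have hτ : bP b τ < θ / b j := by
        rw [lt_div_iff₀ (hb j)]
        rw [bP_cons] at hw
        linarith [mul_comm (b j) (bP b τ)]
      have := ih hτ
      calc b j * bP b (mp b (θ / b j) τ) < b j * (θ / b j) :=
            mul_lt_mul_of_pos_left this (hb j)
        _ = θ := by rw [mul_comm]; exact div_mul_cancel₀ θ (ne_of_gt (hb j))

lemma mp_ne_nil (b : Fin m → ℝ) {θ : ℝ} {w : List (Fin m)}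
    (hw : bP b w < θ) (hθ : θ ≤ 1) : mp b θ w ≠ [] := by
  cases w with
  | nil => simp [bP_nil] at hw; linarith
  | cons j τ =>
    rw [mp_cons, if_neg (by linarith)]
    simp

lemma mp_dropLast (b : Fin m → ℝ) (hb : ∀ j, 0 < b j) {θ : ℝ} {w : List (Fin m)}
    (hw : bP b w < θ) (hne : mp b θ w ≠ []) : θ ≤ bP b (mp b θ w).dropLast := by
  induction w generalizing θ with
  | nil => simp [mp_nil] at hne
  | cons j τ ih =>
    by_cases h1 : 1 < θ
    · rw [mp_cons, if_pos h1] at hne; simp at hne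
    · rw [mp_cons, if_neg h1] at hne ⊢
      push_neg at h1
      rcases eq_or_ne (mp b (θ / b j) τ) [] with hnil | hnil
      · simp [hnil, bP_nil, h1]
      · have hτ : bP b τ < θ / b j := by
          rw [lt_div_iff₀ (hb j)]
          rw [bP_cons] at hw
          linarith [mul_comm (b j) (bP b τ)]
        have hih := ih hτ hnil
        rw [List.dropLast_cons_of_ne_nil hnil, bP_cons]
        calc θ = b j * (θ / b j) := by
              rw [mul_comm]; exact (div_mul_cancel₀ θ (ne_of_gt (hb j))).symm
          _ ≤ b j * bP b (mp b (θ / b j) τ).dropLast :=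
            mul_le_mul_of_nonneg_left hih (le_of_lt (hb j))

lemma sum_map_le {X Y : Type*} [DecidableEq Y] (s : Finset X) (tf : Finset Y)
    (f : X → ℝ) (g : Y → ℝ) (φ : X → Y) (C : ℝ) (M : ℕ) (hC : 0 ≤ C)
    (hmap : ∀ x ∈ s, φ x ∈ tf)
    (hg : ∀ y ∈ tf, 0 ≤ g y)
    (hcmp : ∀ x ∈ s, f x ≤ C * g (φ x))
    (hfib : ∀ y ∈ tf, (s.filter fun x => φ x = y).card ≤ M) :
    ∑ x ∈ s, f x ≤ (M : ℝ) * C * ∑ y ∈ tf, g y := by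
  rw [← Finset.sum_fiberwise_of_maps_to hmap f, Finset.mul_sum]
  refine Finset.sum_le_sum fun y hy => ?_
  have h1 : ∑ x ∈ s.filter (fun x => φ x = y), f x
      ≤ (s.filter (fun x => φ x = y)).card • (C * g y) := by
    refine Finset.sum_le_card_nsmul _ _ _ fun x hx => ?_
    obtain ⟨hxs, hxy⟩ := Finset.mem_filter.mp hx
    have := hcmp x hxs
    rwa [hxy] at this
  refine h1.trans ?_
  rw [nsmul_eq_mul]
  have hCg : 0 ≤ C * g y := mul_nonneg hC (hg y hy)
  calc ((s.filter (fun x => φ x = y)).card : ℝ) * (C * g y)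
      ≤ (M : ℝ) * (C * g y) :=
        mul_le_mul_of_nonneg_right (by exact_mod_cast hfib y hy) hCg
    _ = (M : ℝ) * C * g y := by ring

lemma psi_finite {a : Alph m n → ℝ} {b : Fin m → ℝ}
    (ha : ∀ g, 0 < a g) (hb : ∀ j, 0 < b j)
    (hbm : ∃ c, c < 1 ∧ 0 ≤ c ∧ ∀ j, b j ≤ c)
    (ham : ∃ c, 0 < c ∧ ∀ g, c ≤ a g) (k : ℕ) : (Psi a b k).Finite := by
  obtain ⟨cb, hcb1, hcb0, hcb⟩ := hbm
  obtain ⟨ca, hca0, hca⟩ := ham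
  obtain ⟨N, hN⟩ : ∃ N, cb ^ N < ca ^ k := exists_pow_lt_of_lt_one (pow_pos hca0 k) hcb1
  refine Set.Finite.subset (Set.Finite.prod (List.finite_length_le (Alph m n) k)
      (List.finite_length_le (Fin m) N)) ?_
  rintro ⟨w1, w2⟩ ⟨hlen, hlen2, hub, hlb⟩
  refine ⟨le_of_eq hlen, ?_⟩
  show w2.length ≤ N
  by_contra hcon
  push_neg at hcon
  have h1 : aP a w1 ≤ cb ^ ((sy (w1, w2)).dropLast.length) :=
    le_trans hub (lp_le_pow hb hcb _)
  have hlend : N ≤ (sy (w1, w2)).dropLast.length := by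
    have : (sy (w1, w2)).length = w1.length + w2.length := by
      simp [sy]
    rw [List.length_dropLast, this]
    omega
  have h2 : cb ^ ((sy (w1, w2)).dropLast.length) ≤ cb ^ N :=
    pow_le_pow_of_le_one hcb0 (le_of_lt hcb1) hlend
  have h3 : ca ^ k ≤ aP a w1 := by
    rw [← hlen]; exact lp_pow_le (le_of_lt hca0) hca w1
  linarith

lemma tsum_finite {α : Type*} {S : Set α} (hS : S.Finite) (f : α → ℝ) :
    ∑' x : S, f x = ∑ x ∈ hS.toFinset, f x := by
  conv_lhs => rw [← Set.Finite.coe_toFinset hS]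
  exact hS.toFinset.tsum_subtype' f


set_option maxHeartbeats 1000000 in
theorem stmt12
    (m : ℕ) (hm : 2 ≤ m) (n : Fin m → ℕ) (hn : ∀ j, 1 ≤ n j)
    (a : Alph m n → ℝ) (b : Fin m → ℝ)
    (hab : ∀ g : Alph m n, 0 < a g ∧ a g < b g.1 ∧ b g.1 < 1)
    (p : Alph m n → ℝ) (hp : ∀ g, 0 < p g) (hp1 : ∑ g : Alph m n, p g = 1)
    (r : ℝ) (hr : 0 < r)
    (t : ℝ) (ht : 0 ≤ t) :
    ∃ h1 h2 : ℝ, 0 < h1 ∧ 0 < h2 ∧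
      ∀ l : ℕ, 1 ≤ l → ∀ σ ∈ Psi a b l, ∀ h : ℕ, 1 ≤ h →
        h2 * Er a p r σ ^ t * Ih a b p r h t ≤
            (∑' ρ : LamH a b σ h, Er a p r ρ.1 ^ t) ∧
          (∑' ρ : LamH a b σ h, Er a p r ρ.1 ^ t) ≤
            h1 * Er a p r σ ^ t * Ih a b p r h t := by
  classical
  have hm0 : 0 < m := by omega
  have hnpos : ∀ j : Fin m, 0 < n j := fun j => hn j
  set j0 : Fin m := ⟨0, hm0⟩ with hj0def
  have hb0 : ∀ j, 0 < b j := fun j =>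
    lt_trans (hab ⟨j, ⟨0, hnpos j⟩⟩).1 (hab ⟨j, ⟨0, hnpos j⟩⟩).2.1
  have hb1 : ∀ j, b j < 1 := fun j => (hab ⟨j, ⟨0, hnpos j⟩⟩).2.2
  have ha0 : ∀ g, 0 < a g := fun g => (hab g).1
  have hablt : ∀ g : Alph m n, a g ≤ b g.1 := fun g => (hab g).2.1.le
  have hq0 : ∀ j, 0 < qf p j := fun j =>
    Finset.sum_pos (fun i _ => hp _) (Finset.univ_nonempty_iff.mpr ⟨⟨0, hnpos j⟩⟩)
  have hqsum : ∑ j : Fin m, qf p j = 1 := by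
    rw [← hp1]
    rw [← Finset.univ_sigma_univ, Finset.sum_sigma]
    rfl
  have hq1 : ∀ j, qf p j ≤ 1 := fun j =>
    hqsum ▸ Finset.single_le_sum (fun i _ => (hq0 i).le) (Finset.mem_univ j)
  obtain ⟨jβ, -, hjβ⟩ := Finset.exists_min_image (Finset.univ : Finset (Fin m)) b
    ⟨j0, Finset.mem_univ _⟩
  obtain ⟨jM, -, hjM⟩ := Finset.exists_max_image (Finset.univ : Finset (Fin m)) b
    ⟨j0, Finset.mem_univ _⟩
  obtain ⟨jq, -, hjq⟩ := Finset.exists_min_image (Finset.univ : Finset (Fin m)) (qf p)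
    ⟨j0, Finset.mem_univ _⟩
  obtain ⟨gm, -, hgm⟩ := Finset.exists_min_image (Finset.univ : Finset (Alph m n)) a
    ⟨⟨j0, ⟨0, hnpos j0⟩⟩, Finset.mem_univ _⟩
  have hβ0 : 0 < b jβ := hb0 jβ
  have hβle : ∀ j, b jβ ≤ b j := fun j => hjβ j (Finset.mem_univ j)
  have hbMle : ∀ j, b j ≤ b jM := fun j => hjM j (Finset.mem_univ j)
  have hbM1 : b jM < 1 := hb1 jM
  have hqmle : ∀ j, qf p jq ≤ qf p j := fun j => hjq j (Finset.mem_univ j)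
  have hqm0 : 0 < qf p jq := hq0 jq
  have hqm1 : qf p jq ≤ 1 := hq1 jq
  have hamle : ∀ g, a gm ≤ a g := fun g => hgm g (Finset.mem_univ g)
  have ham0 : 0 < a gm := ha0 gm
  obtain ⟨K0, hK0⟩ : ∃ K, b j0 ^ K < b jβ := exists_pow_lt_of_lt_one hβ0 (hb1 j0)
  obtain ⟨K3, hK3⟩ : ∃ K, b jM ^ K < b jβ ^ 2 :=
    exists_pow_lt_of_lt_one (pow_pos hβ0 2) hbM1
  set M2 : ℕ := (K3 + 1) * m ^ K3 with hM2def
  have hM2pos : 0 < M2 := Nat.mul_pos (Nat.succ_pos _) (pow_pos hm0 K3)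
  have hqmK : 0 < qf p jq ^ K0 := pow_pos hqm0 K0
  set C1 : ℝ := ((qf p jq ^ K0)⁻¹) ^ t with hC1def
  have hC1pos : 0 < C1 := Real.rpow_pos_of_pos (inv_pos.mpr hqmK) t
  refine ⟨((K0 : ℝ) + 1) * C1, ((M2 : ℝ))⁻¹, by positivity,
    inv_pos.mpr (by exact_mod_cast hM2pos), ?_⟩
  intro l hl σ hσ h hh
  obtain ⟨hσlen, hσ2len, hσub, hσlb⟩ := hσ
  have hσ2ne : σ.2 ≠ [] := by
    intro e; rw [e] at hσ2len; simp at hσ2len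
  set jl : Fin m := σ.2.getLast hσ2ne with hjldef
  have hA0 : 0 < aP a σ.1 := aP_pos ha0 _
  have hS1 : 0 < bP b (σ.1.map Sigma.fst) := bP_pos hb0 _
  have hS2 : 0 < bP b σ.2 := bP_pos hb0 _
  have hBsy : bP b (sy σ) = bP b (σ.1.map Sigma.fst) * bP b σ.2 := bP_append b _ _
  have hdropsy : (sy σ).dropLast = σ.1.map Sigma.fst ++ σ.2.dropLast :=
    List.dropLast_append_of_ne_nil hσ2ne
  have hS2split : bP b σ.2.dropLast * b jl = bP b σ.2 := bP_dropLast_getLast hσ2ne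
  have hAub : aP a σ.1 ≤ bP b (σ.1.map Sigma.fst) * bP b σ.2.dropLast := by
    rw [← bP_append, ← hdropsy]; exact hσub
  have hABjl : aP a σ.1 * b jl ≤ bP b (σ.1.map Sigma.fst) * bP b σ.2 := by
    calc aP a σ.1 * b jl ≤ (bP b (σ.1.map Sigma.fst) * bP b σ.2.dropLast) * b jl :=
          mul_le_mul_of_nonneg_right hAub (hb0 jl).le
      _ = bP b (σ.1.map Sigma.fst) * bP b σ.2 := by rw [mul_assoc, hS2split]
  have hBA : bP b (σ.1.map Sigma.fst) * bP b σ.2 < aP a σ.1 := by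
    rw [← hBsy]; exact hσlb
  set thw : List (Alph m n) → ℝ := fun u => aP a u / bP b (u.map Sigma.fst) with hthw
  set thr : List (Alph m n) → ℝ := fun u =>
    (aP a σ.1 * aP a u) /
      (bP b (σ.1.map Sigma.fst) * bP b σ.2 * bP b (u.map Sigma.fst)) with hthr
  have hY0 : ∀ u : List (Alph m n), 0 < bP b (u.map Sigma.fst) := fun u => bP_pos hb0 _
  have hX0 : ∀ u, 0 < aP a u := fun u => aP_pos ha0 u
  have hthw0 : ∀ u, 0 < thw u := fun u => div_pos (hX0 u) (hY0 u)
  have hthr0 : ∀ u, 0 < thr u := fun u =>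
    div_pos (mul_pos hA0 (hX0 u)) (mul_pos (mul_pos hS1 hS2) (hY0 u))
  have hthw1 : ∀ u, thw u ≤ 1 := fun u => (div_le_one (hY0 u)).mpr (aP_le_bP ha0 hablt u)
  have hthwr : ∀ u, thw u ≤ thr u := by
    intro u
    simp only [hthw, hthr]
    rw [div_le_div_iff₀ (hY0 u) (mul_pos (mul_pos hS1 hS2) (hY0 u))]
    nlinarith [mul_pos (hX0 u) (hY0 u), hBA]
  have hthrjl : ∀ u, thr u * b jl ≤ thw u := by
    intro u
    simp only [hthw, hthr]
    rw [div_mul_eq_mul_div, div_le_div_iff₀ (mul_pos (mul_pos hS1 hS2) (hY0 u)) (hY0 u)]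
    nlinarith [mul_pos (hX0 u) (hY0 u), hABjl]
  have hthrjl1 : ∀ u, thr u * b jl ≤ 1 := fun u => le_trans (hthrjl u) (hthw1 u)
  -- finiteness
  have hbMfact : ∃ c, c < 1 ∧ 0 ≤ c ∧ ∀ j, b j ≤ c := ⟨b jM, hbM1, (hb0 jM).le, hbMle⟩
  have hamfact : ∃ c, 0 < c ∧ ∀ g, c ≤ a g := ⟨a gm, ham0, hamle⟩
  have hfinP : (Psi a b h).Finite := psi_finite ha0 hb0 hbMfact hamfact h
  have hfinL : (LamH a b σ h).Finite :=
    (psi_finite ha0 hb0 hbMfact hamfact (σ.1.length + h)).subset (fun ρ hρ => hρ.1)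
  have hEr0 : ∀ ω : Wd m n, 0 < Er a p r ω := fun ω =>
    mul_pos (mul_pos (lp_pos hp ω.1) (lp_pos hq0 ω.2))
      (Real.rpow_pos_of_pos (hX0 ω.1) r)
  have hErt0 : ∀ ω : Wd m n, 0 ≤ Er a p r ω ^ t := fun ω => Real.rpow_nonneg (hEr0 ω).le t
  have hsumL : (∑' ρ : ↥(LamH a b σ h), Er a p r (ρ : Wd m n) ^ t)
      = ∑ x ∈ hfinL.toFinset, Er a p r x ^ t := tsum_finite hfinL (fun x => Er a p r x ^ t)
  have hsumI : Ih a b p r h t = ∑ x ∈ hfinP.toFinset, Er a p r x ^ t := tsum_finite hfinP (fun x => Er a p r x ^ t)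
  rw [hsumL, hsumI]
  -- characterizations
  have hdecomp : ∀ ρ : Wd m n, ρ ∈ LamH a b σ h → ∃ u v,
      ρ = (σ.1 ++ u, σ.2 ++ v) ∧ u.length = h := by
    rintro ⟨ρ1, ρ2⟩ ⟨hPsi, ⟨u, hu⟩, ⟨v, hv⟩⟩
    dsimp only at hu hv
    refine ⟨u, v, by rw [← hu, ← hv], ?_⟩
    have h1 := hPsi.1
    dsimp only at h1
    rw [← hu, List.length_append] at h1
    omega
  have memPsi_elim : ∀ ω : Wd m n, ω ∈ Psi a b h →
      ω.1.length = h ∧ ω.2 ≠ [] ∧ bP b ω.2 < thw ω.1 ∧ thw ω.1 ≤ bP b ω.2.dropLast := by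
    rintro ⟨u, w⟩ ⟨h1, h2, h3, h4⟩
    dsimp only at h1 h2 h3 h4 ⊢
    have hwne : w ≠ [] := by intro e; rw [e] at h2; simp at h2
    refine ⟨h1, hwne, ?_, ?_⟩
    · simp only [hthw]
      rw [lt_div_iff₀ (hY0 u)]
      rw [show sy (u, w) = u.map Sigma.fst ++ w from rfl, bP_append] at h4
      linarith [mul_comm (bP b (u.map Sigma.fst)) (bP b w)]
    · have hd : (sy (u, w)).dropLast = u.map Sigma.fst ++ w.dropLast :=
        List.dropLast_append_of_ne_nil hwne
      simp only [hthw]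
      rw [div_le_iff₀ (hY0 u)]
      rw [hd, bP_append] at h3
      linarith [mul_comm (bP b (u.map Sigma.fst)) (bP b w.dropLast)]
  have memPsi_intro : ∀ u w, u.length = h → w ≠ [] → bP b w < thw u →
      thw u ≤ bP b w.dropLast → (u, w) ∈ Psi a b h := by
    intro u w hul hwne hlt hle
    refine ⟨hul, ?_, ?_, ?_⟩
    · show 1 ≤ w.length
      cases w with
      | nil => exact absurd rfl hwne
      | cons x l => simp
    · show aP a u ≤ bP b (sy (u, w)).dropLast
      have hd : (sy (u, w)).dropLast = u.map Sigma.fst ++ w.dropLast :=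
        List.dropLast_append_of_ne_nil hwne
      rw [hd, bP_append]
      simp only [hthw] at hle
      rw [div_le_iff₀ (hY0 u)] at hle
      linarith [mul_comm (bP b w.dropLast) (bP b (u.map Sigma.fst))]
    · show bP b (sy (u, w)) < aP a u
      rw [show sy (u, w) = u.map Sigma.fst ++ w from rfl, bP_append]
      simp only [hthw] at hlt
      rw [lt_div_iff₀ (hY0 u)] at hlt
      linarith [mul_comm (bP b w) (bP b (u.map Sigma.fst))]
  have hsyrho : ∀ (u : List (Alph m n)) (v : List (Fin m)),
      bP b (sy (σ.1 ++ u, σ.2 ++ v)) =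
        bP b (σ.1.map Sigma.fst) * bP b (u.map Sigma.fst) * (bP b σ.2 * bP b v) := by
    intro u v
    show bP b ((σ.1 ++ u).map Sigma.fst ++ (σ.2 ++ v)) = _
    rw [List.map_append, bP_append, bP_append, bP_append]
  have hdroprho : ∀ (u : List (Alph m n)) (v : List (Fin m)), v ≠ [] →
      bP b ((sy (σ.1 ++ u, σ.2 ++ v)).dropLast) =
        bP b (σ.1.map Sigma.fst) * bP b (u.map Sigma.fst) *
          (bP b σ.2 * bP b v.dropLast) := by
    intro u v hvne
    show bP b (((σ.1 ++ u).map Sigma.fst ++ (σ.2 ++ v)).dropLast) = _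
    rw [List.dropLast_append_of_ne_nil (by simp [hvne] : σ.2 ++ v ≠ []),
      List.dropLast_append_of_ne_nil hvne, List.map_append,
      bP_append, bP_append, bP_append]
  have hdroprhonil : ∀ u : List (Alph m n),
      bP b ((sy (σ.1 ++ u, σ.2 ++ ([] : List (Fin m)))).dropLast) =
        bP b (σ.1.map Sigma.fst) * bP b (u.map Sigma.fst) * bP b σ.2.dropLast := by
    intro u
    show bP b (((σ.1 ++ u).map Sigma.fst ++ (σ.2 ++ [])).dropLast) = _
    rw [List.append_nil, List.dropLast_append_of_ne_nil hσ2ne, List.map_append,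
      bP_append, bP_append]
  have harho : ∀ u, aP a (σ.1 ++ u) = aP a σ.1 * aP a u := fun u => aP_append a _ _
  have memLam_intro : ∀ u v, u.length = h → bP b v < thr u →
      (v ≠ [] → thr u ≤ bP b v.dropLast) → (σ.1 ++ u, σ.2 ++ v) ∈ LamH a b σ h := by
    intro u v hul hv1 hv2
    have hv1' : bP b v * (bP b (σ.1.map Sigma.fst) * bP b σ.2 * bP b (u.map Sigma.fst))
        < aP a σ.1 * aP a u := by
      have := hv1
      simp only [hthr] at this
      rwa [lt_div_iff₀ (mul_pos (mul_pos hS1 hS2) (hY0 u))] at this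
    refine ⟨⟨?_, ?_, ?_, ?_⟩, List.prefix_append _ _, List.prefix_append _ _⟩
    · show (σ.1 ++ u).length = σ.1.length + h
      rw [List.length_append, hul]
    · show 1 ≤ (σ.2 ++ v).length
      rw [List.length_append]; omega
    · show aP a (σ.1 ++ u) ≤ bP b ((sy (σ.1 ++ u, σ.2 ++ v)).dropLast)
      rcases eq_or_ne v [] with rfl | hvne
      · rw [hdroprhonil u, harho u]
        have h5 := hthrjl1 u
        simp only [hthr] at h5
        rw [div_mul_eq_mul_div, div_le_one (mul_pos (mul_pos hS1 hS2) (hY0 u))] at h5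
        have h6 : bP b (σ.1.map Sigma.fst) * bP b σ.2 * bP b (u.map Sigma.fst)
            = (bP b (σ.1.map Sigma.fst) * bP b (u.map Sigma.fst) * bP b σ.2.dropLast)
              * b jl := by rw [← hS2split]; ring
        rw [h6] at h5
        exact le_of_mul_le_mul_right h5 (hb0 jl)
      · rw [hdroprho u v hvne, harho u]
        have h5 := hv2 hvne
        simp only [hthr] at h5
        rw [div_le_iff₀ (mul_pos (mul_pos hS1 hS2) (hY0 u))] at h5
        calc aP a σ.1 * aP a u
            ≤ bP b v.dropLast * (bP b (σ.1.map Sigma.fst) * bP b σ.2 *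
                bP b (u.map Sigma.fst)) := h5
          _ = bP b (σ.1.map Sigma.fst) * bP b (u.map Sigma.fst) *
                (bP b σ.2 * bP b v.dropLast) := by ring
    · show bP b (sy (σ.1 ++ u, σ.2 ++ v)) < aP a (σ.1 ++ u)
      rw [hsyrho u v, harho u]
      calc bP b (σ.1.map Sigma.fst) * bP b (u.map Sigma.fst) * (bP b σ.2 * bP b v)
          = bP b v * (bP b (σ.1.map Sigma.fst) * bP b σ.2 * bP b (u.map Sigma.fst)) := by
            ring
        _ < aP a σ.1 * aP a u := hv1'
  have memLam_elim : ∀ u v, (σ.1 ++ u, σ.2 ++ v) ∈ LamH a b σ h →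
      bP b v < thr u ∧ (v ≠ [] → thr u ≤ bP b v.dropLast) := by
    intro u v hmem
    obtain ⟨⟨hL1, hL2, hL3, hL4⟩, -, -⟩ := hmem
    constructor
    · simp only [hthr]
      rw [lt_div_iff₀ (mul_pos (mul_pos hS1 hS2) (hY0 u))]
      rw [show aP a (σ.1 ++ u, σ.2 ++ v).1 = aP a (σ.1 ++ u) from rfl] at hL4
      rw [hsyrho u v, harho u] at hL4
      calc bP b v * (bP b (σ.1.map Sigma.fst) * bP b σ.2 * bP b (u.map Sigma.fst))
          = bP b (σ.1.map Sigma.fst) * bP b (u.map Sigma.fst) * (bP b σ.2 * bP b v) := by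
            ring
        _ < aP a σ.1 * aP a u := hL4
    · intro hvne
      simp only [hthr]
      rw [div_le_iff₀ (mul_pos (mul_pos hS1 hS2) (hY0 u))]
      rw [show aP a (σ.1 ++ u, σ.2 ++ v).1 = aP a (σ.1 ++ u) from rfl] at hL3
      rw [hdroprho u v hvne, harho u] at hL3
      calc aP a σ.1 * aP a u
          ≤ bP b (σ.1.map Sigma.fst) * bP b (u.map Sigma.fst) *
              (bP b σ.2 * bP b v.dropLast) := hL3
        _ = bP b v.dropLast *
              (bP b (σ.1.map Sigma.fst) * bP b σ.2 * bP b (u.map Sigma.fst)) := by ring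
  -- the two maps
  set rep : List (Fin m) := List.replicate K0 j0 with hrepdef
  set phiu : Wd m n → Wd m n := fun ρ =>
    (ρ.1.drop σ.1.length,
      mp b (thw (ρ.1.drop σ.1.length)) ((ρ.2.drop σ.2.length) ++ rep)) with hphiu
  set phil : Wd m n → Wd m n := fun ω => (σ.1 ++ ω.1, σ.2 ++ mp b (thr ω.1) ω.2) with hphil
  have hphiuval : ∀ (u : List (Alph m n)) (v : List (Fin m)),
      phiu (σ.1 ++ u, σ.2 ++ v) = (u, mp b (thw u) (v ++ rep)) := by
    intro u v
    simp only [hphiu, List.drop_left]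
  have hphilval : ∀ (u : List (Alph m n)) (w : List (Fin m)),
      phil (u, w) = (σ.1 ++ u, σ.2 ++ mp b (thr u) w) := by
    intro u w
    simp only [hphil]
  -- key upper-map properties
  have hup : ∀ ρ, ρ ∈ LamH a b σ h → ∃ u v,
      ρ = (σ.1 ++ u, σ.2 ++ v) ∧ u.length = h ∧
      phiu ρ = (u, mp b (thw u) (v ++ rep)) ∧
      (u, mp b (thw u) (v ++ rep)) ∈ Psi a b h ∧
      v <+: mp b (thw u) (v ++ rep) ∧
      (mp b (thw u) (v ++ rep)).length ≤ v.length + K0 := by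
    intro ρ hρ
    obtain ⟨u, v, rfl, hul⟩ := hdecomp ρ hρ
    obtain ⟨hv1, hv2⟩ := memLam_elim u v hρ
    have harg : bP b (v ++ rep) < thw u := by
      rw [bP_append, hrepdef, bP_replicate]
      have h1 : bP b v * b j0 ^ K0 < thr u * b jβ :=
        mul_lt_mul'' hv1 hK0 (bP_pos hb0 v).le (pow_pos (hb0 j0) K0).le
      have h2 : thr u * b jβ ≤ thr u * b jl :=
        mul_le_mul_of_nonneg_left (hβle jl) (hthr0 u).le
      linarith [hthrjl u]
    have hwne : mp b (thw u) (v ++ rep) ≠ [] := mp_ne_nil b harg (hthw1 u)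
    have hwlt : bP b (mp b (thw u) (v ++ rep)) < thw u := mp_lt b hb0 harg
    have hwdl : thw u ≤ bP b (mp b (thw u) (v ++ rep)).dropLast :=
      mp_dropLast b hb0 harg hwne
    have hwPsi : (u, mp b (thw u) (v ++ rep)) ∈ Psi a b h :=
      memPsi_intro u _ hul hwne hwlt hwdl
    have hwpre : mp b (thw u) (v ++ rep) <+: v ++ rep := mp_prefix b _ _
    have hwlen : (mp b (thw u) (v ++ rep)).length ≤ v.length + K0 := by
      have := hwpre.length_le
      rwa [List.length_append, hrepdef, List.length_replicate] at this
    have hvw : v <+: mp b (thw u) (v ++ rep) := by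
      rcases List.prefix_or_prefix_of_prefix hwpre (List.prefix_append v rep) with hc | hc
      · rcases eq_or_lt_of_le hc.length_le with heq | hlt
        · have hweq : mp b (thw u) (v ++ rep) = v := hc.eq_of_length heq
          rw [hweq]
        · exfalso
          have hvne : v ≠ [] := by
            intro e
            rw [e] at hlt
            simp at hlt
          have hpd : mp b (thw u) (v ++ rep) <+: v.dropLast := prefix_dropLast hc hlt
          have h3 : bP b v.dropLast ≤ bP b (mp b (thw u) (v ++ rep)) :=
            lp_prefix_le hb0 (fun j => (hb1 j).le) hpd
          have h4 := hv2 hvne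
          linarith [hthwr u]
      · exact hc
    exact ⟨u, v, rfl, hul, hphiuval u v, hwPsi, hvw, hwlen⟩
  -- multiplicative identity for Er
  have hErmul : ∀ (u : List (Alph m n)) (v w : List (Fin m)),
      Er a p r (σ.1 ++ u, σ.2 ++ v) * qP p w
        = (Er a p r σ * Er a p r (u, w)) * qP p v := by
    intro u v w
    have h1 : Er a p r (σ.1 ++ u, σ.2 ++ v)
        = (pP p σ.1 * pP p u) * (qP p σ.2 * qP p v) * (aP a σ.1 ^ r * aP a u ^ r) := by
      show pP p (σ.1 ++ u) * qP p (σ.2 ++ v) * aP a (σ.1 ++ u) ^ r = _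
      rw [pP_append, qP_append, aP_append, Real.mul_rpow hA0.le (hX0 u).le]
    rw [h1]
    show _ = (pP p σ.1 * qP p σ.2 * aP a σ.1 ^ r
        * (pP p u * qP p w * aP a u ^ r)) * qP p v
    ring
  -- lower-map properties
  have hlo : ∀ ω, ω ∈ Psi a b h → ∃ v,
      phil ω = (σ.1 ++ ω.1, σ.2 ++ v) ∧
      (σ.1 ++ ω.1, σ.2 ++ v) ∈ LamH a b σ h ∧ v <+: ω.2 ∧
      ω.2.length ≤ v.length + K3 := by
    rintro ⟨u, w⟩ hω
    obtain ⟨hul, hwne, hw1, hw2⟩ := memPsi_elim (u, w) hω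
    dsimp only at hul hwne hw1 hw2
    refine ⟨mp b (thr u) w, hphilval u w, ?_, ?_, ?_⟩
    · -- membership
      have hwr : bP b w < thr u := lt_of_lt_of_le hw1 (hthwr u)
      exact memLam_intro u _ hul (mp_lt b hb0 hwr) (mp_dropLast b hb0 hwr)
    · exact mp_prefix b _ _
    · -- length bound
      have hwr : bP b w < thr u := lt_of_lt_of_le hw1 (hthwr u)
      have hv1 : bP b (mp b (thr u) w) < thr u := mp_lt b hb0 hwr
      obtain ⟨e, he⟩ := mp_prefix b (thr u) w
      have hbw : thw u * b jβ ≤ bP b w := by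
        have h5 : bP b w.dropLast * b (w.getLast hwne) = bP b w :=
          bP_dropLast_getLast hwne
        calc thw u * b jβ ≤ bP b w.dropLast * b (w.getLast hwne) :=
              mul_le_mul hw2 (hβle _) hβ0.le (le_trans (hthw0 u).le hw2)
          _ = bP b w := h5
      have h6 : bP b w = bP b (mp b (thr u) w) * bP b e := by
        conv_lhs => rw [← he]
        rw [bP_append]
      have h7 : thr u * b jl * b jβ ≤ bP b w :=
        le_trans (mul_le_mul_of_nonneg_right (hthrjl u) hβ0.le) hbw
      have h8 : thr u * (b jβ * b jβ) ≤ bP b w := by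
        have h8a : thr u * (b jβ * b jβ) ≤ thr u * (b jl * b jβ) :=
          mul_le_mul_of_nonneg_left
            (mul_le_mul_of_nonneg_right (hβle jl) hβ0.le) (hthr0 u).le
        calc thr u * (b jβ * b jβ) ≤ thr u * (b jl * b jβ) := h8a
          _ = thr u * b jl * b jβ := by ring
          _ ≤ bP b w := h7
      have h9 : bP b w < thr u * bP b e := by
        rw [h6]
        exact mul_lt_mul_of_pos_right hv1 (bP_pos hb0 e)
      have h10 : b jβ * b jβ < bP b e :=
        lt_of_mul_lt_mul_left (lt_of_le_of_lt h8 h9) (hthr0 u).le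
      show w.length ≤ (mp b (thr u) w).length + K3
      by_contra hcon
      push_neg at hcon
      have helen : K3 ≤ e.length := by
        have := congrArg List.length he
        rw [List.length_append] at this
        omega
      have h11 : bP b e ≤ b jM ^ e.length := lp_le_pow hb0 hbMle e
      have h12 : b jM ^ e.length ≤ b jM ^ K3 :=
        pow_le_pow_of_le_one (hb0 jM).le hbM1.le helen
      have h13 : b jβ ^ 2 = b jβ * b jβ := sq (b jβ)
      linarith [hK3]
  -- upper estimates
  have hmapsto_up : ∀ ρ ∈ hfinL.toFinset, phiu ρ ∈ hfinP.toFinset := by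
    intro ρ hρm
    obtain ⟨u, v, heq, hul, hφval, hwPsi, hvw, hwlen⟩ :=
      hup ρ (hfinL.mem_toFinset.mp hρm)
    rw [heq, hphiuval u v]
    exact hfinP.mem_toFinset.mpr hwPsi
  have hcmp_up : ∀ ρ ∈ hfinL.toFinset,
      Er a p r ρ ^ t ≤ (C1 * Er a p r σ ^ t) * Er a p r (phiu ρ) ^ t := by
    intro ρ hρm
    obtain ⟨u, v, heq, hul, hφval, hwPsi, hvw, hwlen⟩ :=
      hup ρ (hfinL.mem_toFinset.mp hρm)
    rw [heq, hphiuval u v]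
    obtain ⟨e, he⟩ := hvw
    have helen : e.length ≤ K0 := by
      have := congrArg List.length he
      rw [List.length_append] at this
      omega
    have hqe : qf p jq ^ K0 ≤ qP p e := by
      calc qf p jq ^ K0 ≤ qf p jq ^ e.length :=
            pow_le_pow_of_le_one hqm0.le hqm1 helen
        _ ≤ qP p e := lp_pow_le hqm0.le hqmle e
    have hqw : qP p v * qf p jq ^ K0 ≤ qP p (mp b (thw u) (v ++ rep)) := by
      conv_rhs => rw [← he]
      rw [qP_append]
      exact mul_le_mul_of_nonneg_left hqe (lp_pos hq0 v).le
    have h1 : Er a p r (σ.1 ++ u, σ.2 ++ v) * (qP p v * qf p jq ^ K0)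
        ≤ Er a p r (σ.1 ++ u, σ.2 ++ v) * qP p (mp b (thw u) (v ++ rep)) :=
      mul_le_mul_of_nonneg_left hqw (hEr0 _).le
    rw [hErmul u v (mp b (thw u) (v ++ rep))] at h1
    have h2 : (Er a p r (σ.1 ++ u, σ.2 ++ v) * qf p jq ^ K0) * qP p v
        ≤ (Er a p r σ * Er a p r (u, mp b (thw u) (v ++ rep))) * qP p v := by
      calc (Er a p r (σ.1 ++ u, σ.2 ++ v) * qf p jq ^ K0) * qP p v
          = Er a p r (σ.1 ++ u, σ.2 ++ v) * (qP p v * qf p jq ^ K0) := by ring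
        _ ≤ _ := h1
    have hkey : Er a p r (σ.1 ++ u, σ.2 ++ v) * qf p jq ^ K0
        ≤ Er a p r σ * Er a p r (u, mp b (thw u) (v ++ rep)) :=
      le_of_mul_le_mul_right h2 (lp_pos hq0 v)
    have hfin : Er a p r (σ.1 ++ u, σ.2 ++ v)
        ≤ (qf p jq ^ K0)⁻¹ * (Er a p r σ * Er a p r (u, mp b (thw u) (v ++ rep))) := by
      rw [inv_mul_eq_div]
      exact (le_div_iff₀ hqmK).mpr hkey
    calc Er a p r (σ.1 ++ u, σ.2 ++ v) ^ t
        ≤ ((qf p jq ^ K0)⁻¹ *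
            (Er a p r σ * Er a p r (u, mp b (thw u) (v ++ rep)))) ^ t :=
          Real.rpow_le_rpow (hEr0 _).le hfin ht
      _ = (C1 * Er a p r σ ^ t) * Er a p r (u, mp b (thw u) (v ++ rep)) ^ t := by
          rw [Real.mul_rpow (inv_pos.mpr hqmK).le (mul_pos (hEr0 σ) (hEr0 _)).le,
            Real.mul_rpow (hEr0 σ).le (hEr0 _).le]
          ring
  have hfib_up : ∀ ω ∈ hfinP.toFinset,
      (hfinL.toFinset.filter fun ρ => phiu ρ = ω).card ≤ K0 + 1 := by
    intro ω hωm
    have hcard : (hfinL.toFinset.filter fun ρ => phiu ρ = ω).card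
        ≤ (Finset.range (K0 + 1)).card := by
      refine Finset.card_le_card_of_injOn
        (fun ρ => ω.2.length - (ρ.2.length - σ.2.length)) ?_ ?_
      · intro ρ hρf
        obtain ⟨hρm, hρφ⟩ := Finset.mem_filter.mp hρf
        obtain ⟨u, v, heq, hul, hφval, hwPsi, hvw, hwlen⟩ :=
          hup ρ (hfinL.mem_toFinset.mp hρm)
        have hωeq : (u, mp b (thw u) (v ++ rep)) = ω := by
          rw [← hρφ, heq, hphiuval u v]
        have hω2 : ω.2.length = (mp b (thw u) (v ++ rep)).length := by rw [← hωeq]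
        have hρ2 : ρ.2.length = σ.2.length + v.length := by
          rw [heq, List.length_append]
        have hle := hvw.length_le
        simp only [Finset.mem_coe, Finset.mem_range]
        omega
      · intro ρ₁ hρ₁f ρ₂ hρ₂f hval
        obtain ⟨hρ₁m, hρ₁φ⟩ := Finset.mem_filter.mp (Finset.mem_coe.mp hρ₁f)
        obtain ⟨hρ₂m, hρ₂φ⟩ := Finset.mem_filter.mp (Finset.mem_coe.mp hρ₂f)
        obtain ⟨u₁, v₁, heq₁, hul₁, hφval₁, hwPsi₁, hvw₁, hwlen₁⟩ :=
          hup ρ₁ (hfinL.mem_toFinset.mp hρ₁m)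
        obtain ⟨u₂, v₂, heq₂, hul₂, hφval₂, hwPsi₂, hvw₂, hwlen₂⟩ :=
          hup ρ₂ (hfinL.mem_toFinset.mp hρ₂m)
        have hωeq₁ : (u₁, mp b (thw u₁) (v₁ ++ rep)) = ω := by
          rw [← hρ₁φ, heq₁, hphiuval u₁ v₁]
        have hωeq₂ : (u₂, mp b (thw u₂) (v₂ ++ rep)) = ω := by
          rw [← hρ₂φ, heq₂, hphiuval u₂ v₂]
        have hu₁ : u₁ = ω.1 := by rw [← hωeq₁]
        have hu₂ : u₂ = ω.1 := by rw [← hωeq₂]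
        have hw₁ : mp b (thw u₁) (v₁ ++ rep) = ω.2 := by rw [← hωeq₁]
        have hw₂ : mp b (thw u₂) (v₂ ++ rep) = ω.2 := by rw [← hωeq₂]
        have hvw₁' : v₁ <+: ω.2 := hw₁ ▸ hvw₁
        have hvw₂' : v₂ <+: ω.2 := hw₂ ▸ hvw₂
        have hρ₁2 : ρ₁.2.length = σ.2.length + v₁.length := by
          rw [heq₁, List.length_append]
        have hρ₂2 : ρ₂.2.length = σ.2.length + v₂.length := by
          rw [heq₂, List.length_append]
        simp only at hval
        have hlen12 : v₁.length = v₂.length := by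
          have e1 := hvw₁'.length_le
          have e2 := hvw₂'.length_le
          omega
        have hv12 : v₁ = v₂ :=
          (List.prefix_of_prefix_length_le hvw₁' hvw₂' (le_of_eq hlen12)).eq_of_length
            hlen12
        rw [heq₁, heq₂, hv12, hu₁.trans hu₂.symm]
    rwa [Finset.card_range] at hcard
  -- lower estimates
  have hmapsto_lo : ∀ ω ∈ hfinP.toFinset, phil ω ∈ hfinL.toFinset := by
    intro ω hωm
    obtain ⟨v, hφval, hmem, hvw, hlen⟩ := hlo ω (hfinP.mem_toFinset.mp hωm)
    rw [hφval]
    exact hfinL.mem_toFinset.mpr hmem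
  have hcmp_lo : ∀ ω ∈ hfinP.toFinset,
      Er a p r σ ^ t * Er a p r ω ^ t ≤ 1 * Er a p r (phil ω) ^ t := by
    intro ω hωm
    obtain ⟨v, hφval, hmem, hvw, hlen⟩ := hlo ω (hfinP.mem_toFinset.mp hωm)
    rw [one_mul, hφval]
    have hqvw : qP p ω.2 ≤ qP p v := lp_prefix_le hq0 hq1 hvw
    have h2 := hErmul ω.1 v ω.2
    rw [Prod.mk.eta] at h2
    have h3 : (Er a p r σ * Er a p r ω) * qP p ω.2
        ≤ (Er a p r σ * Er a p r ω) * qP p v :=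
      mul_le_mul_of_nonneg_left hqvw (mul_pos (hEr0 σ) (hEr0 ω)).le
    rw [← h2] at h3
    have hkey : Er a p r σ * Er a p r ω ≤ Er a p r (σ.1 ++ ω.1, σ.2 ++ v) :=
      le_of_mul_le_mul_right h3 (lp_pos hq0 ω.2)
    calc Er a p r σ ^ t * Er a p r ω ^ t
        = (Er a p r σ * Er a p r ω) ^ t :=
          (Real.mul_rpow (hEr0 σ).le (hEr0 ω).le).symm
      _ ≤ Er a p r (σ.1 ++ ω.1, σ.2 ++ v) ^ t :=
          Real.rpow_le_rpow (mul_pos (hEr0 σ) (hEr0 ω)).le hkey ht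
  have hfib_lo : ∀ ρ ∈ hfinL.toFinset,
      (hfinP.toFinset.filter fun ω => phil ω = ρ).card ≤ M2 := by
    intro ρ hρm
    have hcard : (hfinP.toFinset.filter fun ω => phil ω = ρ).card
        ≤ ((Finset.range (K3 + 1)) ×ˢ
            (Finset.univ : Finset (Fin K3 → Fin m))).card := by
      refine Finset.card_le_card_of_injOn
        (fun ω => (ω.2.length - (ρ.2.length - σ.2.length),
          fun i : Fin K3 => (ω.2.drop (ρ.2.length - σ.2.length)).getD i j0)) ?_ ?_
      · intro ω hωf
        obtain ⟨hωm, hωφ⟩ := Finset.mem_filter.mp hωf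
        obtain ⟨v, hφval, hmem, hvw, hlen⟩ := hlo ω (hfinP.mem_toFinset.mp hωm)
        have hρeq : ρ = (σ.1 ++ ω.1, σ.2 ++ v) := by rw [← hωφ, hφval]
        have hρ2 : ρ.2.length = σ.2.length + v.length := by
          rw [hρeq, List.length_append]
        simp only [Finset.mem_coe, Finset.mem_product, Finset.mem_range, Finset.mem_univ, and_true]
        have := hvw.length_le
        omega
      · intro ω₁ hω₁f ω₂ hω₂f hval
        obtain ⟨hω₁m, hω₁φ⟩ := Finset.mem_filter.mp (Finset.mem_coe.mp hω₁f)
        obtain ⟨hω₂m, hω₂φ⟩ := Finset.mem_filter.mp (Finset.mem_coe.mp hω₂f)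
        obtain ⟨v₁, hφval₁, hmem₁, hvw₁, hlen₁⟩ := hlo ω₁ (hfinP.mem_toFinset.mp hω₁m)
        obtain ⟨v₂, hφval₂, hmem₂, hvw₂, hlen₂⟩ := hlo ω₂ (hfinP.mem_toFinset.mp hω₂m)
        have hρeq₁ : ρ = (σ.1 ++ ω₁.1, σ.2 ++ v₁) := by rw [← hω₁φ, hφval₁]
        have hρeq₂ : ρ = (σ.1 ++ ω₂.1, σ.2 ++ v₂) := by rw [← hω₂φ, hφval₂]
        have hu12 : ω₁.1 = ω₂.1 := by
          have h1 : ρ.1 = σ.1 ++ ω₁.1 := by rw [hρeq₁]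
          have h2 : ρ.1 = σ.1 ++ ω₂.1 := by rw [hρeq₂]
          exact List.append_cancel_left (h1 ▸ h2)
        have hv12 : v₁ = v₂ := by
          have h1 : ρ.2 = σ.2 ++ v₁ := by rw [hρeq₁]
          have h2 : ρ.2 = σ.2 ++ v₂ := by rw [hρeq₂]
          exact List.append_cancel_left (h1 ▸ h2)
        have hρ2 : ρ.2.length = σ.2.length + v₁.length := by
          rw [hρeq₁, List.length_append]
        have hdropval : ρ.2.length - σ.2.length = v₁.length := by omega
        obtain ⟨e₁, he₁⟩ := hvw₁
        obtain ⟨e₂, he₂⟩ := hvw₂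
        have hd₁ : ω₁.2.drop v₁.length = e₁ := by
          conv_lhs => rw [← he₁]
          exact List.drop_left
        have hd₂ : ω₂.2.drop v₁.length = e₂ := by
          conv_lhs => rw [← he₂, hv12]
          exact List.drop_left
        have hval1 : ω₁.2.length - (ρ.2.length - σ.2.length)
            = ω₂.2.length - (ρ.2.length - σ.2.length) := congrArg Prod.fst hval
        have hval2 : (fun i : Fin K3 => (ω₁.2.drop (ρ.2.length - σ.2.length)).getD i j0)
            = (fun i : Fin K3 => (ω₂.2.drop (ρ.2.length - σ.2.length)).getD i j0) :=
          congrArg Prod.snd hval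
        have hlen₁' : ω₁.2.length = v₁.length + e₁.length := by
          rw [← he₁, List.length_append]
        have hlen₂' : ω₂.2.length = v₂.length + e₂.length := by
          rw [← he₂, List.length_append]
        have hvlen12 : v₁.length = v₂.length := by rw [hv12]
        have he12len : e₁.length = e₂.length := by omega
        have heK : e₁.length ≤ K3 := by omega
        have he12 : e₁ = e₂ := by
          apply List.ext_getElem he12len
          intro i hi₁ hi₂
          have hiK : i < K3 := lt_of_lt_of_le hi₁ heK
          have hgd := congrFun hval2 ⟨i, hiK⟩
          rw [hdropval, hd₁, hd₂] at hgd
          simpa [List.getD_eq_getElem?_getD, List.getElem?_eq_getElem, hi₁, hi₂]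
            using hgd
        have hw12 : ω₁.2 = ω₂.2 := by rw [← he₁, ← he₂, hv12, he12]
        exact Prod.ext hu12 hw12
    rw [Finset.card_product, Finset.card_range, Finset.card_univ, Fintype.card_fun,
      Fintype.card_fin, Fintype.card_fin] at hcard
    rw [hM2def]
    exact hcard
  -- assembling
  constructor
  · have hlow := sum_map_le hfinP.toFinset hfinL.toFinset
      (fun ω => Er a p r σ ^ t * Er a p r ω ^ t) (fun ρ => Er a p r ρ ^ t) phil 1 M2
      zero_le_one hmapsto_lo (fun ρ _ => hErt0 ρ) hcmp_lo hfib_lo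
    rw [mul_one, ← Finset.mul_sum] at hlow
    have hM2R : (0:ℝ) < (M2 : ℝ) := by exact_mod_cast hM2pos
    calc (M2:ℝ)⁻¹ * Er a p r σ ^ t * (∑ x ∈ hfinP.toFinset, Er a p r x ^ t)
        = (M2:ℝ)⁻¹ * (Er a p r σ ^ t * ∑ x ∈ hfinP.toFinset, Er a p r x ^ t) := by
          ring
      _ ≤ (M2:ℝ)⁻¹ * ((M2:ℝ) * ∑ x ∈ hfinL.toFinset, Er a p r x ^ t) :=
          mul_le_mul_of_nonneg_left hlow (inv_pos.mpr hM2R).le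
      _ = ∑ x ∈ hfinL.toFinset, Er a p r x ^ t := by
          rw [← mul_assoc, inv_mul_cancel₀ (ne_of_gt hM2R), one_mul]
  · have hupb := sum_map_le hfinL.toFinset hfinP.toFinset
      (fun ρ => Er a p r ρ ^ t) (fun ω => Er a p r ω ^ t) phiu
      (C1 * Er a p r σ ^ t) (K0 + 1)
      (mul_nonneg hC1pos.le (hErt0 σ)) hmapsto_up (fun ω _ => hErt0 ω) hcmp_up hfib_up
    calc (∑ x ∈ hfinL.toFinset, Er a p r x ^ t)
        ≤ ((K0 + 1 : ℕ) : ℝ) * (C1 * Er a p r σ ^ t)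
            * ∑ x ∈ hfinP.toFinset, Er a p r x ^ t := hupb
      _ = ((K0:ℝ) + 1) * C1 * Er a p r σ ^ t
            * ∑ x ∈ hfinP.toFinset, Er a p r x ^ t := by
          push_cast
          ring




end

end LGQ
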